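/- If μ is a partitioned order of [n] consisting of s o-blocks all of the same size p, then φ(μ) is an ordered partition of [n] consisting of p blocks, each of size s. -/

import Mathlib

/-- A partitioned order of `[n]`: a set of pairwise disjoint nonempty lists
of distinct elements of `[n]` whose union is `[n]`. -/
structure PartitionedOrder (n : ℕ) where
  oblocks : Finset (List (Fin n))
  nonempty : ∀ S ∈ oblocks, S ≠ []
  nodup : ∀ S ∈ oblocks, S.Nodup
  disjoint : ∀ S ∈ oblocks, ∀ T ∈ oblocks, S ≠ T → ∀ x, x ∈ S → x ∉ T
  cover : ∀ x : Fin n, ∃ S ∈ oblocks, x ∈ S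

namespace PartitionedOrder

variable {n : ℕ}

/-- The block `W_ℓ = { S_k[ℓ mod n_k] : k }` of the sequential rewriting. -/
def phiBlock (μ : PartitionedOrder n) (ℓ : ℕ) : Finset (Fin n) :=
  μ.oblocks.attach.image (fun S =>
    S.1.get ⟨ℓ % S.1.length,
      Nat.mod_lt _ (List.length_pos_iff.mpr (μ.nonempty S.1 S.2))⟩)

/-- The period `p` of a partitioned order: the lcm of its o-block lengths. -/
def period (μ : PartitionedOrder n) : ℕ := μ.oblocks.lcm List.length

/-- The sequential rewriting `φ(μ) = (W_0, …, W_{p-1})`. -/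
def phi (μ : PartitionedOrder n) : List (Finset (Fin n)) :=
  (List.range μ.period).map μ.phiBlock

end PartitionedOrder

/-- An ordered partition of `[n]` (block-sequential update mode): a sequence of
nonempty pairwise disjoint subsets of `[n]` whose union is `[n]`. -/
def IsOrderedPartition {n : ℕ} (L : List (Finset (Fin n))) : Prop :=
  (∀ W ∈ L, W.Nonempty) ∧ L.Pairwise Disjoint ∧ ∀ x : Fin n, ∃ W ∈ L, x ∈ W

/-- if a partitioned order has `s` o-blocks, all of size `p`, then
its rewriting is an ordered partition made of `p` blocks, each of size `s`. -/
theorem phi_of_uniform_partitioned_order {n s p : ℕ} (μ : PartitionedOrder n)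
    (hne : μ.oblocks.Nonempty) (hcard : μ.oblocks.card = s)
    (hlen : ∀ S ∈ μ.oblocks, S.length = p) :
    IsOrderedPartition μ.phi ∧ μ.phi.length = p ∧ ∀ W ∈ μ.phi, W.card = s := by
  obtain ⟨S0, hS0⟩ := hne
  have hp0 : 0 < p := by
    rw [← hlen S0 hS0]
    exact List.length_pos_iff.mpr (μ.nonempty S0 hS0)
  have hper : μ.period = p := by
    apply Nat.dvd_antisymm
    · exact Finset.lcm_dvd (fun S hS => (hlen S hS) ▸ dvd_refl p)
    · exact (hlen S0 hS0) ▸ Finset.dvd_lcm hS0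
  -- membership characterization
  have hmem : ∀ (ℓ : ℕ) (x : Fin n), x ∈ μ.phiBlock ℓ ↔
      ∃ S : {S // S ∈ μ.oblocks}, S.1.get ⟨ℓ % S.1.length,
        Nat.mod_lt _ (List.length_pos_iff.mpr (μ.nonempty S.1 S.2))⟩ = x := by
    intro ℓ x
    simp [PartitionedOrder.phiBlock]
  have hlenphi : μ.phi.length = p := by
    simp [PartitionedOrder.phi, hper]
  refine ⟨⟨?_, ?_, ?_⟩, hlenphi, ?_⟩
  · intro W hW
    simp only [PartitionedOrder.phi, List.mem_map, List.mem_range] at hW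
    obtain ⟨ℓ, _, rfl⟩ := hW
    refine ⟨_, (hmem ℓ _).mpr ⟨⟨S0, hS0⟩, rfl⟩⟩
  · rw [PartitionedOrder.phi, List.pairwise_map, List.pairwise_iff_getElem]
    intro a b ha hb hab
    simp only [List.length_range] at ha hb
    rw [List.getElem_range, List.getElem_range]
    rw [hper] at ha hb
    refine Finset.disjoint_left.mpr ?_
    intro x hxi hxj
    set i := a with hia
    set j := b with hjb
    obtain ⟨⟨S, hS⟩, hxS⟩ := (hmem i x).mp hxi
    obtain ⟨⟨T, hT⟩, hxT⟩ := (hmem j x).mp hxj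
    have hST : S = T := by
      by_contra hne'
      exact μ.disjoint S hS T hT hne' x (hxS ▸ List.get_mem _ _) (hxT ▸ List.get_mem _ _)
    subst hST
    have := (μ.nodup S hS).get_inj_iff.mp (hxS.trans hxT.symm)
    have : i % S.length = j % S.length := congrArg Fin.val this
    rw [hlen S hS, Nat.mod_eq_of_lt ha, Nat.mod_eq_of_lt hb] at this
    omega
  · intro x
    obtain ⟨S, hS, hxS⟩ := μ.cover x
    obtain ⟨i, hi⟩ := List.get_of_mem hxS
    refine ⟨μ.phiBlock i.1, ?_, ?_⟩
    · simp only [PartitionedOrder.phi, List.mem_map, List.mem_range]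
      exact ⟨i.1, by rw [hper, ← hlen S hS]; exact i.2, rfl⟩
    · refine (hmem _ _).mpr ⟨⟨S, hS⟩, ?_⟩
      rw [← hi]
      congr 1
      exact Fin.ext (Nat.mod_eq_of_lt i.2)
  · intro W hW
    simp only [PartitionedOrder.phi, List.mem_map, List.mem_range] at hW
    obtain ⟨ℓ, _, rfl⟩ := hW
    rw [PartitionedOrder.phiBlock, Finset.card_image_of_injOn, Finset.card_attach, hcard]
    intro S _ T _ h
    have hST : S.1 = T.1 := by
      by_contra hne'
      simp only at h
      refine μ.disjoint S.1 S.2 T.1 T.2 hne'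
        (T.1.get ⟨ℓ % T.1.length, Nat.mod_lt _ (List.length_pos_iff.mpr (μ.nonempty T.1 T.2))⟩)
        ?_ (List.get_mem _ _)
      rw [← h]
      exact List.get_mem _ _
    exact Subtype.ext hST
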